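/- arXiv:1106.3280 — 3 statements merged into one kernel-verified Lean document; each statement's English description precedes it below -/
import Mathlib

section
/- Let n ≥ 2 and k = log(n−1) + πi. The point Q = (b₁, ..., bₙ) with bⱼ = −k/n for 1 ≤ j ≤ n−1 and bₙ = k − k/n satisfies ∑ⱼ e^{bⱼ} = 0, ∑ⱼ bⱼ = 0, and its squared distance to the diagonal D equals |k|²(1 − 1/n). -/
theorem point_Q_properties (n : ℕ) (hn : 2 ≤ n)
    (k : ℂ) (hk : k = Real.log (n - 1 : ℕ) + Real.pi * Complex.I)
    (b : EuclideanSpace ℂ (Fin n))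
    (hb : ∀ j : Fin n, b j = if (j : ℕ) < n - 1 then -k / n else k - k / n) :
    (∑ j, Complex.exp (b j) = 0) ∧ (∑ j, b j = 0) ∧
      (Metric.infDist b {p : EuclideanSpace ℂ (Fin n) | ∃ w : ℂ, ∀ j, p j = w}) ^ 2
        = ‖k‖ ^ 2 * (1 - 1 / n) := by
  obtain ⟨m, rfl⟩ : ∃ m, n = m + 1 := ⟨n - 1, by omega⟩
  have hm : 1 ≤ m := by omega
  have hm0 : (0:ℝ) < m := by exact_mod_cast hm
  have hN : ((m:ℂ) + 1) ≠ 0 := by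
    intro h
    have : (m:ℂ) = -1 := by linear_combination h
    have := congrArg Complex.re this
    simp at this
    linarith
  have hNcast : ((m + 1 : ℕ) : ℂ) = (m:ℂ) + 1 := by push_cast; ring
  have h1 : ∀ i : Fin m, b i.castSucc = -k / ((m:ℂ)+1) := by
    intro i
    rw [hb]
    simp [i.isLt, hNcast]
  have h2 : b (Fin.last m) = k - k / ((m:ℂ)+1) := by
    rw [hb]
    simp [hNcast]
  -- sum of b is zero
  have hsum : ∑ j, b j = 0 := by
    rw [Fin.sum_univ_castSucc]
    simp only [h1, h2, Finset.sum_const, Finset.card_univ, Fintype.card_fin, nsmul_eq_mul]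
    field_simp
    ring
  -- exp k = -m
  have hek : Complex.exp k = -(m:ℂ) := by
    subst hk
    simp only [Nat.add_sub_cancel]
    rw [Complex.exp_add, Complex.exp_pi_mul_I, ← Complex.ofReal_exp, Real.exp_log hm0]
    push_cast
    ring
  have hes : ∑ j, Complex.exp (b j) = 0 := by
    rw [Fin.sum_univ_castSucc]
    simp only [h1, h2, Finset.sum_const, Finset.card_univ, Fintype.card_fin, nsmul_eq_mul]
    rw [show k - k / ((m:ℂ)+1) = -(k / ((m:ℂ)+1)) + k by ring, Complex.exp_add, hek,
      neg_div]
    ring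
  refine ⟨hes, hsum, ?_⟩
  set S : Set (EuclideanSpace ℂ (Fin (m+1))) := {p | ∃ w : ℂ, ∀ j, p j = w} with hSdef
  have h0S : (0 : EuclideanSpace ℂ (Fin (m+1))) ∈ S := ⟨0, fun j => rfl⟩
  have hSne : S.Nonempty := ⟨0, h0S⟩
  have hle : Metric.infDist b S ≤ ‖b‖ := by
    simpa using Metric.infDist_le_dist_of_mem h0S
  have hge : ‖b‖ ≤ Metric.infDist b S := by
    refine le_of_not_gt fun hlt => ?_
    obtain ⟨p, hpS, hdp⟩ := (Metric.infDist_lt_iff hSne).1 hlt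
    obtain ⟨w, hw⟩ := hpS
    have hip : (inner ℂ b p : ℂ) = 0 := by
      rw [PiLp.inner_apply]
      simp only [hw, RCLike.inner_apply]
      rw [← Finset.mul_sum, ← map_sum, hsum]
      simp
    have hsq : ‖b‖ ^ 2 ≤ ‖b - p‖ ^ 2 := by
      rw [@norm_sub_sq ℂ, hip]
      simp [sq_nonneg]
    have : ‖b‖ ≤ ‖b - p‖ := by
      nlinarith [norm_nonneg b, norm_nonneg (b - p), hsq]
    rw [dist_eq_norm] at hdp
    linarith
  have hd : Metric.infDist b S = ‖b‖ := le_antisymm hle hge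
  rw [hd]
  have hnorm : ‖b‖ ^ 2 = ∑ j, ‖b j‖ ^ 2 := by
    rw [EuclideanSpace.norm_eq, Real.sq_sqrt]
    positivity
  rw [hnorm, Fin.sum_univ_castSucc]
  simp only [h1, h2, Finset.sum_const, Finset.card_univ, Fintype.card_fin, nsmul_eq_mul]
  have hR : ((m:ℝ) + 1) ≠ 0 := by positivity
  have e1 : ‖-k / ((m:ℂ)+1)‖ = ‖k‖ / ((m:ℝ)+1) := by
    rw [norm_div, norm_neg]
    congr 1
    rw [show ((m:ℂ)+1) = ((m+1:ℕ):ℂ) by push_cast; ring, Complex.norm_natCast]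
    push_cast; ring
  have e2 : ‖k - k / ((m:ℂ)+1)‖ = ‖k‖ * ((m:ℝ) / ((m:ℝ)+1)) := by
    have : k - k / ((m:ℂ)+1) = k * ((m:ℂ) / ((m:ℂ)+1)) := by field_simp; ring
    rw [this, norm_mul]
    congr 1
    rw [norm_div, Complex.norm_natCast,
      show ((m:ℂ)+1) = ((m+1:ℕ):ℂ) by push_cast; ring, Complex.norm_natCast]
    push_cast; ring
  rw [e1, e2]
  have hcast : ((m + 1 : ℕ) : ℝ) = (m:ℝ) + 1 := by push_cast; ring
  rw [hcast]
  field_simp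
  ring
end

section
/- Under the normalization ∑ⱼ zⱼ = 0 and the bound ∑ⱼ |zⱼ|² ≤ |k|²(1 − 1/n), with aⱼ = zⱼ − bⱼ, one has ∑ⱼ₌₁ⁿ |aⱼ|² ≤ 2|k||aₙ|. -/
open ComplexConjugate

theorem lemma1_sum_sq_le (n : ℕ) (hn : 2 ≤ n)
    (k : ℂ) (hk : k = Real.log (n - 1 : ℕ) + Real.pi * Complex.I)
    (b : Fin n → ℂ)
    (hb : ∀ j : Fin n, b j = if (j : ℕ) < n - 1 then -k / n else k - k / n)
    (z : Fin n → ℂ) (hzsum : ∑ j, z j = 0)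
    (hznorm : ∑ j, ‖z j‖ ^ 2 ≤ ‖k‖ ^ 2 * (1 - 1 / n))
    (a : Fin n → ℂ) (ha : ∀ j, a j = z j - b j) :
    ∑ j, ‖a j‖ ^ 2 ≤ 2 * ‖k‖ * ‖a ⟨n - 1, by omega⟩‖ := by
  have hn0 : (n:ℝ) ≠ 0 := by
    have : (2:ℝ) ≤ n := by exact_mod_cast hn
    linarith
  set last : Fin n := ⟨n - 1, by omega⟩ with hlast
  have hblast : b last = k - k / n := by
    rw [hb]; simp [hlast]
  have hb' : ∀ j : Fin n, b j = -k / n + (if j = last then k else 0) := by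
    intro j
    by_cases h : j = last
    · subst h; rw [hblast]; simp; ring
    · have hj2 : (j:ℕ) ≠ n - 1 := fun hc => h (Fin.ext hc)
      have hj3 := j.isLt
      have hj : (j:ℕ) < n - 1 := by omega
      rw [hb]; simp [hj, h]
  have hsum1 : ∑ j, z j * conj (b j) = z last * conj k := by
    calc ∑ j, z j * conj (b j)
        = ∑ j, (z j * conj (-k / n) + (if j = last then z j * conj k else 0)) := by
          refine Finset.sum_congr rfl fun j _ => ?_
          rw [hb' j, map_add, mul_add]
          congr 1
          split <;> simp
      _ = (∑ j, z j) * conj (-k / n) + z last * conj k := by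
          rw [Finset.sum_add_distrib, ← Finset.sum_mul]
          simp
      _ = z last * conj k := by rw [hzsum]; ring
  have hnormne : Complex.normSq (-k / (n:ℂ)) = Complex.normSq k / (n:ℝ)^2 := by
    rw [Complex.normSq_div, Complex.normSq_neg]
    norm_num [Complex.normSq_natCast]
    ring
  have hcast : (1 - 1/(n:ℂ)) = ((1 - 1/(n:ℝ) : ℝ) : ℂ) := by push_cast; ring
  have hblast2 : Complex.normSq (b last) = Complex.normSq k * (1 - 1/(n:ℝ))^2 := by
    rw [hblast]
    have h1 : k - k/(n:ℂ) = k * (1 - 1/(n:ℂ)) := by ring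
    rw [h1, map_mul]
    congr 1
    rw [hcast, Complex.normSq_ofReal]; ring
  have hsum2 : ∑ j, Complex.normSq (b j) = Complex.normSq k * (1 - 1/(n:ℝ)) := by
    have step : ∀ j : Fin n, Complex.normSq (b j)
        = Complex.normSq k / (n:ℝ)^2
          + (if j = last then Complex.normSq k * (1 - 1/(n:ℝ))^2 - Complex.normSq k / (n:ℝ)^2 else 0) := by
      intro j
      by_cases h : j = last
      · subst h; rw [hblast2]; simp
      · have hbj : b j = -k / n := by rw [hb' j]; simp [h]
        rw [hbj, hnormne]; simp [h]
    rw [Finset.sum_congr rfl fun j _ => step j, Finset.sum_add_distrib,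
      Finset.sum_const, Finset.sum_ite_eq']
    simp only [Finset.mem_univ, if_true, Finset.card_univ, Fintype.card_fin, nsmul_eq_mul]
    field_simp
    ring
  have expand : ∀ j : Fin n, ‖a j‖ ^ 2
      = Complex.normSq (z j) + Complex.normSq (b j) - 2 * (z j * conj (b j)).re := by
    intro j
    rw [ha, Complex.sq_norm, Complex.normSq_sub]
  have hresum : ∑ j, (z j * conj (b j)).re = (z last * conj k).re := by
    rw [← Complex.re_sum, hsum1]
  have htot : ∑ j, ‖a j‖ ^ 2
      = (∑ j, Complex.normSq (z j)) + Complex.normSq k * (1 - 1/(n:ℝ))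
        - 2 * (z last * conj k).re := by
    rw [Finset.sum_congr rfl fun j _ => expand j]
    rw [Finset.sum_sub_distrib, Finset.sum_add_distrib, hsum2, ← Finset.mul_sum, hresum]
  have hznorm' : ∑ j, Complex.normSq (z j) ≤ Complex.normSq k * (1 - 1/(n:ℝ)) := by
    calc ∑ j, Complex.normSq (z j) = ∑ j, ‖z j‖ ^ 2 := by
          refine Finset.sum_congr rfl fun j _ => (Complex.sq_norm _).symm
      _ ≤ ‖k‖ ^ 2 * (1 - 1/(n:ℝ)) := hznorm
      _ = Complex.normSq k * (1 - 1/(n:ℝ)) := by rw [Complex.sq_norm]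
  have key : Complex.normSq k * (1 - 1/(n:ℝ)) - (z last * conj k).re
      ≤ ‖k‖ * ‖a last‖ := by
    have h1 : Complex.normSq k * (1 - 1/(n:ℝ)) - (z last * conj k).re
        = ((-(a last)) * conj k).re := by
      rw [ha, hblast]
      have h2 : (-(z last - (k - k / (n:ℂ)))) * conj k
          = (k * conj k) * (1 - 1/(n:ℂ)) - z last * conj k := by ring
      rw [h2, Complex.mul_conj, hcast, ← Complex.ofReal_mul, Complex.sub_re,
        Complex.ofReal_re]
    rw [h1]
    calc ((-(a last)) * conj k).re ≤ ‖(-(a last)) * conj k‖ :=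
          Complex.re_le_norm _
      _ = ‖k‖ * ‖a last‖ := by
          rw [norm_mul, norm_neg, Complex.norm_conj]; ring
  rw [htot]
  have hal : ‖a ⟨n - 1, by omega⟩‖ = ‖a last‖ := rfl
  rw [hal]
  linarith
end

section
/- For every complex number w, |e^w − 1| ≥ |w|/2 whenever |w| ≤ 1, and consequently if (n−1)|e^{aₙ} − 1| ≤ C n^{0.75} + |aₙ| with |aₙ| ≤ π + log n and n sufficiently large, then the distance from aₙ to the set 2πiℤ is O(n^{−0.2}). -/
lemma normSq_exp_sub_one (z : ℂ) :
    Complex.normSq (Complex.exp z - 1)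
      = (Real.exp z.re - 1)^2 + 2 * Real.exp z.re * (1 - Real.cos z.im) := by
  have h := Real.sin_sq_add_cos_sq z.im
  simp only [Complex.normSq_apply, Complex.sub_re, Complex.sub_im, Complex.exp_re,
    Complex.exp_im, Complex.one_re, Complex.one_im]
  linear_combination (Real.exp z.re)^2 * h

lemma real_sq : ∀ x : ℝ, -1 ≤ x → x ≤ 1 → (x/2)^2 ≤ (Real.exp x - 1)^2 := by
  intro x h1 h2
  rcases le_or_gt 0 x with hx | hx
  · nlinarith [Real.add_one_le_exp x]
  · have h3 : 1 - x ≤ Real.exp (-x) := by have := Real.add_one_le_exp (-x); linarith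
    have h4 : Real.exp x * Real.exp (-x) = 1 := by rw [← Real.exp_add]; simp
    have h5 : Real.exp x ≤ 1 + x/2 := by
      have hpos : (0:ℝ) < 1 - x := by linarith
      have h6 : Real.exp x ≤ 1/(1-x) := by
        rw [le_div_iff₀ hpos]
        nlinarith [Real.exp_pos x, Real.exp_pos (-x)]
      have h7 : 1/(1-x) ≤ 1 + x/2 := by
        rw [div_le_iff₀ hpos]; nlinarith
      linarith
    nlinarith [Real.exp_pos x]

lemma exp_ge_third {x : ℝ} (hx : -1 ≤ x) : 1/3 ≤ Real.exp x := by
  have h1 : Real.exp (-1) ≤ Real.exp x := Real.exp_le_exp.2 hx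
  have h2 : Real.exp 1 ≤ 3 := by
    have := Real.exp_one_lt_d9; linarith
  have h3 : Real.exp (-1) * Real.exp 1 = 1 := by rw [← Real.exp_add]; simp
  nlinarith [Real.exp_pos (-1), Real.exp_pos (1:ℝ)]

lemma cos_half_sq (y : ℝ) : Real.cos y = 1 - 2 * Real.sin (y/2)^2 := by
  have h := Real.cos_two_mul (y/2)
  have h2 := Real.sin_sq_add_cos_sq (y/2)
  rw [show 2*(y/2) = y by ring] at h
  linarith

lemma one_sub_cos_aux {y : ℝ} (h1 : 0 ≤ y) (h2 : y ≤ 1) : (3/8) * y^2 ≤ 1 - Real.cos y := by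
  rcases eq_or_lt_of_le h1 with rfl | hpos
  · simp
  · have hc := cos_half_sq y
    have hs : y/2 - (y/2)^3/4 < Real.sin (y/2) := by
      have := Real.sin_gt_sub_cube (x := y/2) (by linarith)
      nlinarith [pow_pos (by linarith : (0:ℝ) < y/2) 3]
    have hs2 : (15/32) * y ≤ Real.sin (y/2) := by
      nlinarith [mul_nonneg (mul_nonneg hpos.le (by linarith : (0:ℝ) ≤ 1 - y))
        (by linarith : (0:ℝ) ≤ 1 + y)]
    have hsq : (15/32*y)^2 ≤ Real.sin (y/2)^2 := pow_le_pow_left₀ (by positivity) hs2 2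
    nlinarith [hsq]

lemma one_sub_cos {y : ℝ} (h1 : -1 ≤ y) (h2 : y ≤ 1) : (3/8) * y^2 ≤ 1 - Real.cos y := by
  rcases le_or_gt 0 y with hy | hy
  · exact one_sub_cos_aux hy h2
  · have := one_sub_cos_aux (y := -y) (by linarith) (by linarith)
    simpa [Real.cos_neg] using this

lemma part1 : ∀ w : ℂ, ‖w‖ ≤ 1 → ‖w‖ / 2 ≤ ‖Complex.exp w - 1‖ := by
  intro w hw
  have hre : |w.re| ≤ 1 := (Complex.abs_re_le_norm w).trans hw
  have him : |w.im| ≤ 1 := (Complex.abs_im_le_norm w).trans hw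
  rw [abs_le] at hre him
  have hA := real_sq w.re hre.1 hre.2
  have hB := one_sub_cos him.1 him.2
  have hE := exp_ge_third (x := w.re) hre.1
  have hsq : (‖w‖ / 2)^2 ≤ (‖Complex.exp w - 1‖)^2 := by
    rw [div_pow, Complex.sq_norm, Complex.sq_norm, normSq_exp_sub_one]
    have h1 : Complex.normSq w = w.re^2 + w.im^2 := Complex.normSq_apply w |>.trans (by ring)
    have h2 : 2 * Real.exp w.re * (1 - Real.cos w.im) ≥ (1/4) * w.im^2 := by
      have hcos : Real.cos w.im ≤ 1 := Real.cos_le_one _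
      nlinarith
    rw [h1]
    nlinarith
  have h0 : 0 ≤ ‖Complex.exp w - 1‖ := norm_nonneg _
  have h0' : 0 ≤ ‖w‖ / 2 := by positivity
  nlinarith

lemma jordan_aux {y : ℝ} (h0 : 0 ≤ y) (h1 : y ≤ Real.pi) :
    2 * y^2 ≤ Real.pi^2 * (1 - Real.cos y) := by
  have hπ := Real.pi_pos
  have hs : 2 / Real.pi * (y/2) ≤ Real.sin (y/2) :=
    Real.mul_le_sin (by linarith) (by linarith)
  have hs' : y / Real.pi ≤ Real.sin (y/2) := by
    have heq : 2 / Real.pi * (y/2) = y / Real.pi := by field_simp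
    linarith
  have hsq : (y / Real.pi)^2 ≤ Real.sin (y/2)^2 := pow_le_pow_left₀ (by positivity) hs' 2
  have hc := cos_half_sq y
  have hfs : (y/Real.pi)^2 * Real.pi^2 = y^2 := by field_simp
  nlinarith [hsq, sq_nonneg Real.pi]

lemma jordan {y : ℝ} (h : |y| ≤ Real.pi) : 2 * y^2 ≤ Real.pi^2 * (1 - Real.cos y) := by
  rw [abs_le] at h
  rcases le_or_gt 0 y with hy | hy
  · exact jordan_aux hy h.2
  · have := jordan_aux (y := -y) (by linarith) (by linarith)
    simpa [Real.cos_neg] using this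

lemma core {x y ε : ℝ}
    (hns : (Real.exp x - 1)^2 + 2 * Real.exp x * (1 - Real.cos y) ≤ ε^2)
    (hym : |y| ≤ Real.pi) (hε0 : 0 ≤ ε) (hε2 : ε ≤ 1/2) :
    x^2 + y^2 ≤ 25 * ε^2 := by
  have hcos1 : Real.cos y ≤ 1 := Real.cos_le_one y
  have hexpos := Real.exp_pos x
  have hA : (Real.exp x - 1)^2 ≤ ε^2 := by nlinarith
  have hB : 2 * Real.exp x * (1 - Real.cos y) ≤ ε^2 := by nlinarith [sq_nonneg (Real.exp x - 1)]
  have hxa : |Real.exp x - 1| ≤ ε := by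
    nlinarith [abs_nonneg (Real.exp x - 1), sq_abs (Real.exp x - 1)]
  rw [abs_le] at hxa
  have hx1 : x ≤ ε := by nlinarith [Real.add_one_le_exp x]
  have h9 : (1 - x) * Real.exp x ≤ 1 := by
    have h10 := Real.add_one_le_exp (-x)
    have h11 : Real.exp x * Real.exp (-x) = 1 := by rw [← Real.exp_add]; simp
    nlinarith
  have hx2 : -(2*ε) ≤ x := by nlinarith [h9]
  have hB2 : 1 - Real.cos y ≤ (3/2) * ε^2 := by
    have hE := exp_ge_third (x := x) (by linarith)
    nlinarith
  have hj := jordan hym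
  have hπ2 : Real.pi^2 ≤ 10 := by nlinarith [Real.pi_lt_d2, Real.pi_pos]
  have hy2 : y^2 ≤ 8 * ε^2 := by
    have h12 : Real.pi^2 * (1 - Real.cos y) ≤ 10 * ((3/2)*ε^2) :=
      mul_le_mul hπ2 hB2 (by linarith) (by norm_num)
    linarith
  nlinarith

lemma key (a : ℂ) (ε : ℝ) (hε : ‖Complex.exp a - 1‖ ≤ ε) (hε2 : ε ≤ 1/2) :
    ∃ m : ℤ, ‖a - 2 * Real.pi * Complex.I * m‖ ≤ 5 * ε := by
  have hε0 : 0 ≤ ε := le_trans (norm_nonneg _) hε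
  have hπ := Real.pi_pos
  refine ⟨round (a.im / (2 * Real.pi)), ?_⟩
  set m : ℤ := round (a.im / (2 * Real.pi)) with hm
  have hrw : (2 * (Real.pi:ℂ) * Complex.I * (m:ℂ)) = ((2*Real.pi*m : ℝ) : ℂ) * Complex.I := by
    push_cast; ring
  have hbre : (a - 2 * Real.pi * Complex.I * m).re = a.re := by rw [hrw]; simp
  have hbim : (a - 2 * Real.pi * Complex.I * m).im = a.im - 2 * Real.pi * m := by rw [hrw]; simp
  have hexp : Complex.exp (a - 2 * Real.pi * Complex.I * m) = Complex.exp a := by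
    rw [Complex.exp_sub,
      show (2 * (Real.pi:ℂ) * Complex.I * (m:ℂ)) = (m:ℂ) * (2 * Real.pi * Complex.I) by ring,
      Complex.exp_int_mul_two_pi_mul_I, div_one]
  have hns : Complex.normSq (Complex.exp (a - 2 * Real.pi * Complex.I * m) - 1) ≤ ε^2 := by
    rw [← Complex.sq_norm, hexp]
    exact pow_le_pow_left₀ (norm_nonneg _) hε 2
  rw [normSq_exp_sub_one, hbre, hbim] at hns
  have hym : |a.im - 2 * Real.pi * m| ≤ Real.pi := by
    have h2 : a.im - 2*Real.pi*m = 2*Real.pi * (a.im/(2*Real.pi) - m) := by field_simp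
    rw [h2, abs_mul, abs_of_pos (by positivity : (0:ℝ) < 2*Real.pi)]
    calc 2*Real.pi * |a.im/(2*Real.pi) - (m:ℝ)| ≤ 2*Real.pi * (1/2) :=
          mul_le_mul_of_nonneg_left (abs_sub_round _) (by positivity)
      _ = Real.pi := by ring
  have hc := core hns hym hε0 hε2
  have hfin : Complex.normSq (a - 2 * Real.pi * Complex.I * m) ≤ 25 * ε^2 := by
    rw [Complex.normSq_apply, hbre, hbim]
    nlinarith
  have habs : ‖a - 2 * Real.pi * Complex.I * m‖ ^ 2 ≤ (5*ε)^2 := by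
    rw [Complex.sq_norm]; nlinarith
  nlinarith [norm_nonneg (a - 2 * Real.pi * Complex.I * (m:ℂ)), habs]

theorem lemma8_near_multiple_of_two_pi_i :
    (∀ w : ℂ, ‖w‖ ≤ 1 → ‖w‖ / 2 ≤ ‖Complex.exp w - 1‖) ∧
    ∀ C : ℝ, 0 < C → ∃ C' : ℝ, 0 < C' ∧ ∃ N : ℕ, ∀ n : ℕ, N ≤ n →
      ∀ a : ℂ,
        ((n : ℝ) - 1) * ‖Complex.exp a - 1‖
            ≤ C * (n : ℝ) ^ (0.75 : ℝ) + ‖a‖ →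
        ‖a‖ ≤ Real.pi + Real.log n →
        ∃ m : ℤ, ‖a - 2 * Real.pi * Complex.I * m‖
          ≤ C' * (n : ℝ) ^ (-0.2 : ℝ) := by
  refine ⟨part1, ?_⟩
  intro C hC
  refine ⟨10*(C+8), by positivity, ⌈(4*(C+8))^4⌉₊ + 2, ?_⟩
  intro n hn a hyp ha
  have hn2 : (2:ℕ) ≤ n := le_trans (by omega) hn
  have hnR : (2:ℝ) ≤ (n:ℝ) := by exact_mod_cast hn2
  have hn1 : (1:ℝ) ≤ (n:ℝ) := by linarith
  have hnpos : (0:ℝ) < (n:ℝ) := by linarith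
  have hNceil : ((4*(C+8))^4 : ℝ) ≤ (n:ℝ) := by
    calc ((4*(C+8))^4 : ℝ) ≤ (⌈(4*(C+8))^4⌉₊ : ℝ) := Nat.le_ceil _
    _ ≤ (n:ℝ) := by exact_mod_cast le_trans (by omega) hn
  have h025pos : (0:ℝ) < (n:ℝ)^(0.25:ℝ) := Real.rpow_pos_of_pos hnpos _
  have hneg25pos : (0:ℝ) < (n:ℝ)^(-(0.25):ℝ) := Real.rpow_pos_of_pos hnpos _
  have h2K : 4*(C+8) ≤ (n:ℝ)^(0.25:ℝ) := by
    have h1 := Real.rpow_le_rpow (by positivity) hNceil (by norm_num : (0:ℝ) ≤ 0.25)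
    have h2 : ((4*(C+8))^4 : ℝ) ^ (0.25:ℝ) = 4*(C+8) := by
      rw [← Real.rpow_natCast (4*(C+8)) 4, ← Real.rpow_mul (by positivity)]
      norm_num
    rwa [h2] at h1
  -- |a| ≤ 8 n^0.75
  have hlog : Real.log (n:ℝ) ≤ 4 * (n:ℝ)^(0.25:ℝ) := by
    have h1 : Real.log ((n:ℝ)^(0.25:ℝ)) = 0.25 * Real.log (n:ℝ) := Real.log_rpow hnpos _
    have h2 : Real.log ((n:ℝ)^(0.25:ℝ)) ≤ (n:ℝ)^(0.25:ℝ) - 1 :=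
      Real.log_le_sub_one_of_pos h025pos
    nlinarith
  have h25le75 : (n:ℝ)^(0.25:ℝ) ≤ (n:ℝ)^(0.75:ℝ) :=
    Real.rpow_le_rpow_of_exponent_le hn1 (by norm_num)
  have hone75 : (1:ℝ) ≤ (n:ℝ)^(0.75:ℝ) := by
    have := Real.rpow_le_rpow (by norm_num) hn1 (by norm_num : (0:ℝ) ≤ 0.75)
    rwa [Real.one_rpow] at this
  have haB : ‖a‖ ≤ 8 * (n:ℝ)^(0.75:ℝ) := by
    have := Real.pi_le_four
    nlinarith [ha]
  -- ε bound
  have hsplit : (n:ℝ)^(0.75:ℝ) = (n:ℝ)^(-(0.25):ℝ) * (n:ℝ) := by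
    have h := Real.rpow_add hnpos (-(0.25)) 1
    rw [Real.rpow_one] at h
    norm_num at h ⊢
    rw [h]
  have hε0 : (0:ℝ) ≤ ‖Complex.exp a - 1‖ := norm_nonneg _
  have hεb : ‖Complex.exp a - 1‖ ≤ (2*(C+8)) * (n:ℝ)^(-(0.25):ℝ) := by
    have h1 : ((n:ℝ) - 1) * ‖Complex.exp a - 1‖
        ≤ (C+8) * ((n:ℝ)^(-(0.25):ℝ) * (n:ℝ)) := by
      rw [← hsplit]; nlinarith [hyp, haB]
    nlinarith [h1, mul_nonneg hε0 (by linarith : (0:ℝ) ≤ (n:ℝ) - 2),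
      mul_pos hneg25pos hnpos]
  have hinv : (n:ℝ)^(0.25:ℝ) * (n:ℝ)^(-(0.25):ℝ) = 1 := by
    rw [← Real.rpow_add hnpos]; norm_num
  have hhalf : (2*(C+8)) * (n:ℝ)^(-(0.25):ℝ) ≤ 1/2 := by
    nlinarith [mul_le_mul_of_nonneg_right h2K hneg25pos.le]
  obtain ⟨m, hm⟩ := key a ((2*(C+8)) * (n:ℝ)^(-(0.25):ℝ)) hεb hhalf
  refine ⟨m, hm.trans ?_⟩
  have hmono : (n:ℝ)^(-(0.25):ℝ) ≤ (n:ℝ)^(-0.2:ℝ) :=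
    Real.rpow_le_rpow_of_exponent_le hn1 (by norm_num)
  have hK5 : (0:ℝ) ≤ 10*(C+8) := by positivity
  calc 5 * ((2*(C+8)) * (n:ℝ)^(-(0.25):ℝ)) = (10*(C+8)) * (n:ℝ)^(-(0.25):ℝ) := by ring
  _ ≤ (10*(C+8)) * (n:ℝ)^(-0.2:ℝ) := mul_le_mul_of_nonneg_left hmono hK5
end
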